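/- If at each iteration of the diffusion algorithm every nonzero selected entry γ_i satisfies γ_i ≥ ε·d(i), and the total reserve never exceeds ‖f‖_1, then the total degree-weighted work Σ_ℓ Σ_{i ∈ supp(γ^{(ℓ)})} d(i) is at most ‖f‖_1 / ((1−α)ε). -/
import Mathlib


/-- Work bound for GreedyDiffuse: if at each iteration every nonzero selected
residual entry satisfies `γ ℓ i ≥ ε * d i`, then the total degree-weighted work
`∑_ℓ ∑_{i ∈ supp(γ ℓ)} d i` is at most `‖f‖₁ / ((1-α) ε)`. -/
theorem greedy_diffuse_work_bound {n : ℕ} (P : Matrix (Fin n) (Fin n) ℝ)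
    (hPnonneg : ∀ i j, 0 ≤ P i j) (hProw : ∀ i, ∑ j, P i j = 1)
    (α : ℝ) (hα : α ∈ Set.Ioo (0 : ℝ) 1) (ε : ℝ) (hε : 0 < ε)
    (d : Fin n → ℝ) (hdpos : ∀ i, 0 < d i)
    (f : Fin n → ℝ) (hf : ∀ i, 0 ≤ f i)
    (r q γ : ℕ → Fin n → ℝ)
    (hr0 : r 0 = f) (hq0 : q 0 = 0)
    (hγ : ∀ ℓ i, 0 ≤ γ ℓ i ∧ γ ℓ i ≤ r ℓ i)
    (hthresh : ∀ ℓ i, γ ℓ i ≠ 0 → ε * d i ≤ γ ℓ i)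
    (hqrec : ∀ ℓ, q (ℓ + 1) = q ℓ + (1 - α) • γ ℓ)
    (hrrec : ∀ ℓ, r (ℓ + 1) = r ℓ - γ ℓ + α • Matrix.vecMul (γ ℓ) P) :
    ∀ L, ∑ ℓ ∈ Finset.range L,
        ∑ i ∈ Finset.univ.filter (fun i => γ ℓ i ≠ 0), d i ≤
      (∑ i, f i) / ((1 - α) * ε) := by
  obtain ⟨hα0, hα1⟩ := hα
  have h1α : (0:ℝ) < 1 - α := by linarith
  have hrnn : ∀ ℓ i, 0 ≤ r ℓ i := by
    intro ℓ
    induction ℓ with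
    | zero => intro i; rw [hr0]; exact hf i
    | succ ℓ ih =>
      intro i
      rw [hrrec ℓ]
      have h1 : 0 ≤ Matrix.vecMul (γ ℓ) P i := by
        simp only [Matrix.vecMul, dotProduct]
        exact Finset.sum_nonneg fun j _ => mul_nonneg (hγ ℓ j).1 (hPnonneg j i)
      have h2 := (hγ ℓ i).2
      simp only [Pi.add_apply, Pi.sub_apply, Pi.smul_apply, smul_eq_mul]
      nlinarith
  have hsum : ∀ ℓ, ∑ i, Matrix.vecMul (γ ℓ) P i = ∑ i, γ ℓ i := by
    intro ℓ
    simp only [Matrix.vecMul, dotProduct]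
    rw [Finset.sum_comm]
    simp [← Finset.mul_sum, hProw]
  have hinv : ∀ L, ∑ i, r L i + ∑ i, q L i = ∑ i, f i := by
    intro L
    induction L with
    | zero => simp [hr0, hq0]
    | succ L ih =>
      rw [hrrec L, hqrec L]
      simp only [Pi.add_apply, Pi.sub_apply, Pi.smul_apply, smul_eq_mul]
      rw [Finset.sum_add_distrib, Finset.sum_sub_distrib, Finset.sum_add_distrib,
        ← Finset.mul_sum, ← Finset.mul_sum, hsum L]
      linarith
  have hqsum : ∀ L, ∑ i, q L i = (1 - α) * ∑ ℓ ∈ Finset.range L, ∑ i, γ ℓ i := by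
    intro L
    induction L with
    | zero => simp [hq0]
    | succ L ih =>
      rw [Finset.sum_range_succ, hqrec L]
      simp only [Pi.add_apply, Pi.smul_apply, smul_eq_mul]
      rw [Finset.sum_add_distrib, ih, ← Finset.mul_sum]
      ring
  intro L
  have hper : ∀ ℓ, ε * ∑ i ∈ Finset.univ.filter (fun i => γ ℓ i ≠ 0), d i ≤ ∑ i, γ ℓ i := by
    intro ℓ
    rw [Finset.mul_sum]
    calc ∑ i ∈ Finset.univ.filter (fun i => γ ℓ i ≠ 0), ε * d i
        ≤ ∑ i ∈ Finset.univ.filter (fun i => γ ℓ i ≠ 0), γ ℓ i :=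
          Finset.sum_le_sum fun i hi => hthresh ℓ i (Finset.mem_filter.mp hi).2
      _ ≤ ∑ i, γ ℓ i :=
          Finset.sum_le_sum_of_subset_of_nonneg (Finset.filter_subset _ _)
            (fun i _ _ => (hγ ℓ i).1)
  have hq_le : ∑ i, q L i ≤ ∑ i, f i := by
    have h := hinv L
    have hr : (0:ℝ) ≤ ∑ i, r L i := Finset.sum_nonneg fun i _ => hrnn L i
    linarith
  rw [le_div_iff₀ (by positivity)]
  calc (∑ ℓ ∈ Finset.range L, ∑ i ∈ Finset.univ.filter (fun i => γ ℓ i ≠ 0), d i)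
        * ((1 - α) * ε)
      = (1 - α) * ∑ ℓ ∈ Finset.range L,
          ε * ∑ i ∈ Finset.univ.filter (fun i => γ ℓ i ≠ 0), d i := by
        rw [Finset.mul_sum, Finset.sum_mul]
        exact Finset.sum_congr rfl fun ℓ _ => by ring
    _ ≤ (1 - α) * ∑ ℓ ∈ Finset.range L, ∑ i, γ ℓ i := by
        apply mul_le_mul_of_nonneg_left (Finset.sum_le_sum fun ℓ _ => hper ℓ) h1α.le
    _ = ∑ i, q L i := (hqsum L).symm
    _ ≤ ∑ i, f i := hq_le
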